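/- Let a and n be integers with 2 ≤ a < n and gcd(a,n) = 1. Then there exists a positive integer l with n < 2·l·a < 2n, and for any such l the lattice point (2, 2l) lies in the interior of P_{a,n} and is not visible (since gcd(2, 2l) = 2 > 1). In particular P_{a,n} contains a non-visible interior lattice point. -/

import Mathlib

/-- `(x, y) ∈ ℤ²` lies in the interior of the lattice parallelogram
`P_{a,n} = {t₁·(1,0) + t₂·(a,n) : 0 ≤ t₁, t₂ ≤ 1}`. -/
def inInteriorP (a n : ℤ) (p : ℤ × ℤ) : Prop :=
  ∃ t₁ t₂ : ℝ, 0 < t₁ ∧ t₁ < 1 ∧ 0 < t₂ ∧ t₂ < 1 ∧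
    (p.1 : ℝ) = t₁ + t₂ * (a : ℝ) ∧ (p.2 : ℝ) = t₂ * (n : ℝ)

/-- A lattice point `(x, y) ∈ ℤ²` is visible (from the origin) if `gcd(x, y) = 1`. -/
def VisiblePt (p : ℤ × ℤ) : Prop := Int.gcd p.1 p.2 = 1

/-- `V a n` is the number of visible lattice points in the interior of `P_{a,n}`. -/
noncomputable def V (a n : ℤ) : ℕ :=
  {p : ℤ × ℤ | inInteriorP a n p ∧ VisiblePt p}.ncard

/-- For `2 ≤ a < n` with `gcd(a, n) = 1`, there is a positive integer `l` with
`n < 2·l·a < 2n`, and for any such `l` the point `(2, 2l)` is a non-visible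
lattice point in the interior of `P_{a,n}`. -/
theorem exists_nonvisible_interior_point (a n : ℤ) (ha : 2 ≤ a) (han : a < n)
    (hgcd : Int.gcd a n = 1) :
    (∃ l : ℤ, 0 < l ∧ n < 2 * l * a ∧ 2 * l * a < 2 * n) ∧
      ∀ l : ℤ, 0 < l → n < 2 * l * a → 2 * l * a < 2 * n →
        inInteriorP a n (2, 2 * l) ∧ ¬ VisiblePt (2, 2 * l) := by

  have hn0 : (0:ℤ) < n := by omega
  have ha0 : (0:ℤ) < 2 * a := by omega
  have hand : ¬ (a ∣ n) := by
    intro hd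
    have : a ∣ Int.gcd a n := Int.dvd_coe_gcd dvd_rfl hd
    rw [hgcd] at this
    have := Int.le_of_dvd (by norm_num) this
    omega
  constructor
  · obtain ⟨q, r, hqr, hr0, hr1, hsmall⟩ :
        ∃ q r : ℤ, 2 * a * q + r = n ∧ 0 ≤ r ∧ r < 2 * a ∧ (n < 2 * a → r = n) :=
      ⟨n / (2 * a), n % (2 * a), Int.mul_ediv_add_emod n (2 * a),
        Int.emod_nonneg n (by omega), Int.emod_lt_of_pos n ha0,
        fun h => Int.emod_eq_of_lt hn0.le h⟩
    have hrne : r ≠ 0 := by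
      intro h
      exact hand ⟨2 * q, by linear_combination h - hqr⟩
    have hr2 : 1 ≤ r := lt_of_le_of_ne hr0 (Ne.symm hrne)
    have he : 2 * (q + 1) * a = n - r + 2 * a := by linear_combination hqr
    refine ⟨q + 1, ?_, ?_, ?_⟩
    · nlinarith
    · linarith
    · rcases le_or_gt (2 * a) n with h | h
      · linarith
      · have := hsmall h
        linarith
  · intro l hl hl1 hl2
    constructor
    · have hnR : (0:ℝ) < (n:ℝ) := by exact_mod_cast hn0
      have h2l : 2 * l < n := by nlinarith
      have hc1 : (2 * l : ℝ) * a < 2 * n := by exact_mod_cast hl2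
      have hc2 : (n : ℝ) < 2 * l * a := by exact_mod_cast hl1
      refine ⟨2 - (2 * l : ℝ) / n * a, (2 * l : ℝ) / n, ?_, ?_, ?_, ?_, ?_, ?_⟩
      · rw [div_mul_eq_mul_div, sub_pos, div_lt_iff₀ hnR]
        linarith
      · rw [div_mul_eq_mul_div, sub_lt_iff_lt_add]
        have h1 : (1:ℝ) < 2 * l * a / n := by
          rw [lt_div_iff₀ hnR]; linarith
        linarith
      · positivity
      · rw [div_lt_one hnR]; exact_mod_cast h2l
      · push_cast; ring
      · push_cast; field_simp
    · intro hv
      unfold VisiblePt at hv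
      simp only at hv
      have h2 : Int.gcd 2 (2 * l) = 2 := by simpa using Int.gcd_mul_left 2 1 l
      omega
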